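/- Weak greedy convergence rate: Let H be a Hilbert space with dictionary D (unit vectors with dense span), ρ ∈ (0,1], and f ∈ H with f = ∑_l c_l e_{q_l} for dictionary elements e_{q_l}, M = ∑_l |c_l| < ∞. If at each step k the parameter q_k is chosen so that |⟨f, E_k^{q_k}⟩|² ≥ ρ² sup_q |⟨f, E_k^q⟩|² (where E_k^q denotes the Gram–Schmidt orthonormalization of the chosen kernels with candidate q at step k), then the n-th remainder g_n = f − ∑_{k=1}^{n} ⟨f, E_k⟩E_k satisfies ‖g_n‖ ≤ M/(ρ√n). -/

import Mathlib

open scoped ComplexConjugate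

private lemma aux_quad (B x : ℝ) (hB : 0 < B) (hx : 0 ≤ x) (n : ℕ) (hn : 1 ≤ n)
    (hxn : x * n ≤ B) : (x - x ^ 2 / B) * (n + 1) ≤ B := by
  have key : ((n : ℝ) + 1) * B * x - ((n : ℝ) + 1) * x ^ 2 ≤ B ^ 2 := by
    have h1 : 0 ≤ B - x * n := by linarith
    have h2 : (1 : ℝ) ≤ n := by exact_mod_cast hn
    nlinarith [sq_nonneg (B - x * n), sq_nonneg x, mul_nonneg (mul_nonneg (by linarith : (0:ℝ) ≤ (n:ℝ) - 1) h1) hx]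
  have hrw : (x - x ^ 2 / B) * (n + 1) = (((n : ℝ) + 1) * B * x - ((n : ℝ) + 1) * x ^ 2) / B := by
    field_simp
  rw [hrw, div_le_iff₀ hB]
  nlinarith [key]

private lemma aux_rec (B : ℝ) (hB : 0 < B) (a : ℕ → ℝ) (ha : ∀ k, 0 ≤ a k)
    (h0 : a 0 ≤ B) (hstep : ∀ k, a (k + 1) ≤ a k - a k ^ 2 / B) :
    ∀ n : ℕ, a n * n ≤ B := by
  intro n
  induction n with
  | zero => simpa using hB.le
  | succ m ih =>
    rcases Nat.eq_zero_or_pos m with hm | hm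
    · subst hm
      have := hstep 0
      have h2 : a 0 ^ 2 / B ≥ 0 := by positivity
      simpa using by linarith
    · have h1 : a (m + 1) ≤ a m - a m ^ 2 / B := hstep m
      have h2 : (a m - a m ^ 2 / B) * (m + 1) ≤ B :=
        aux_quad B (a m) hB (ha m) m hm ih
      have h3 : (0 : ℝ) ≤ (m : ℝ) + 1 := by positivity
      push_cast
      calc a (m + 1) * ((m : ℝ) + 1) ≤ (a m - a m ^ 2 / B) * ((m : ℝ) + 1) :=
            mul_le_mul_of_nonneg_right h1 h3
        _ ≤ B := h2

/-- Weak greedy convergence rate. -/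
theorem stmt14 {H : Type*} [NormedAddCommGroup H] [InnerProductSpace ℂ H] [CompleteSpace H]
    {ι : Type*} (e : ι → H) (hunit : ∀ q, ‖e q‖ = 1)
    (hdense : Dense (Submodule.span ℂ (Set.range e) : Set H))
    (ρ : ℝ) (hρ : ρ ∈ Set.Ioc (0 : ℝ) 1)
    (f : H) (c : ℕ → ℂ) (qs : ℕ → ι)
    (hrep : HasSum (fun l => c l • e (qs l)) f)
    (M : ℝ) (hM : M = ∑' l, ‖c l‖) (hMfin : Summable fun l => ‖c l‖)
    (sel : ℕ → ι) (E : ℕ → H) (hON : Orthonormal ℂ E)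
    (Ecand : ℕ → ι → H)
    (hEcand : ∀ k q, Ecand k q =
      ‖e q - ∑ i ∈ Finset.range k, (inner ℂ (E i) (e q) : ℂ) • E i‖⁻¹ •
        (e q - ∑ i ∈ Finset.range k, (inner ℂ (E i) (e q) : ℂ) • E i))
    (hE : ∀ k, E k = Ecand k (sel k))
    (hweak : ∀ k, ρ ^ 2 * (⨆ q, ‖(inner ℂ (Ecand k q) f : ℂ)‖ ^ 2)
      ≤ ‖(inner ℂ (E k) f : ℂ)‖ ^ 2)
    (n : ℕ) (hn : 0 < n) :
    ‖f - ∑ k ∈ Finset.range n, (inner ℂ (E k) f : ℂ) • E k‖ ≤ M / (ρ * Real.sqrt n) := by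
  obtain ⟨hρ0, hρ1⟩ := hρ
  -- notation
  set g : ℕ → H := fun k => f - ∑ i ∈ Finset.range k, (inner ℂ (E i) f : ℂ) • E i with hg
  set a : ℕ → ℝ := fun k => ‖g k‖ ^ 2 with ha
  set S : ℕ → ℝ := fun k => ⨆ q, ‖(inner ℂ (Ecand k q) f : ℂ)‖ ^ 2 with hSdef
  show ‖g n‖ ≤ M / (ρ * Real.sqrt n)
  -- general orthogonality of residuals
  have horth : ∀ (x : H) (k j : ℕ), j < k →
      (inner ℂ (E j) (x - ∑ i ∈ Finset.range k, (inner ℂ (E i) x : ℂ) • E i) : ℂ) = 0 := by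
    intro x k j hj
    rw [inner_sub_right, inner_sum]
    simp only [inner_smul_right]
    rw [Finset.sum_eq_single j]
    · rw [orthonormal_iff_ite.mp hON]
      simp
    · intro i _ hi
      rw [orthonormal_iff_ite.mp hON]
      simp [Ne.symm hi]
    · intro h
      exact absurd (Finset.mem_range.mpr hj) h
  have horthE : ∀ k j, j < k → (inner ℂ (E j) (g k) : ℂ) = 0 := fun k j hj => horth f k j hj
  have hgE : ∀ k i, i < k → (inner ℂ (g k) (E i) : ℂ) = 0 := by
    intro k i hi
    rw [← inner_conj_symm, horthE k i hi, map_zero]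
  -- norm of candidates at most 1
  have hEcn : ∀ k q, ‖Ecand k q‖ ≤ 1 := by
    intro k q
    rw [hEcand, norm_smul, norm_inv, norm_norm]
    rcases eq_or_ne ‖e q - ∑ i ∈ Finset.range k, (inner ℂ (E i) (e q) : ℂ) • E i‖ 0 with h | h
    · simp [h]
    · rw [inv_mul_cancel₀ h]
  have hne : Nonempty ι := ⟨qs 0⟩
  have hSbdd : ∀ k, BddAbove (Set.range fun q => ‖(inner ℂ (Ecand k q) f : ℂ)‖ ^ 2) := by
    intro k
    refine ⟨‖f‖ ^ 2, ?_⟩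
    rintro _ ⟨q, rfl⟩
    have h1 : ‖(inner ℂ (Ecand k q) f : ℂ)‖ ≤ ‖Ecand k q‖ * ‖f‖ := norm_inner_le_norm _ _
    have h2 : ‖Ecand k q‖ * ‖f‖ ≤ 1 * ‖f‖ :=
      mul_le_mul_of_nonneg_right (hEcn k q) (norm_nonneg f)
    have h3 : ‖(inner ℂ (Ecand k q) f : ℂ)‖ ≤ ‖f‖ := by linarith
    exact pow_le_pow_left₀ (norm_nonneg _) h3 2
  have hS0 : ∀ k, 0 ≤ S k := by
    intro k
    refine le_trans (by positivity) (le_ciSup (hSbdd k) (Classical.arbitrary ι))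
  -- the recursion for a
  have hinnerEk : ∀ k, (inner ℂ (E k) (g k) : ℂ) = inner ℂ (E k) f := by
    intro k
    rw [hg]
    simp only [inner_sub_right, inner_sum, inner_smul_right]
    rw [Finset.sum_eq_zero, sub_zero]
    intro i hi
    rw [orthonormal_iff_ite.mp hON]
    have : k ≠ i := by
      intro h; subst h; exact absurd hi (by simp)
    simp [this]
  have hrec : ∀ k, a (k + 1) = a k - ‖(inner ℂ (E k) f : ℂ)‖ ^ 2 := by
    intro k
    have hsplit : g (k + 1) = g k - (inner ℂ (E k) f : ℂ) • E k := by
      simp only [hg, Finset.sum_range_succ]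
      abel
    have hEk1 : ‖E k‖ = 1 := hON.1 k
    have key : ‖g k - (inner ℂ (E k) f : ℂ) • E k‖ ^ 2
        = ‖g k‖ ^ 2 - 2 * Complex.re (inner ℂ (g k) ((inner ℂ (E k) f : ℂ) • E k))
          + ‖(inner ℂ (E k) f : ℂ) • E k‖ ^ 2 := norm_sub_sq (𝕜 := ℂ) _ _
    have h1 : (inner ℂ (g k) ((inner ℂ (E k) f : ℂ) • E k) : ℂ)
        = ((‖(inner ℂ (E k) f : ℂ)‖ : ℂ)) ^ 2 := by
      rw [inner_smul_right, ← inner_conj_symm (𝕜 := ℂ) (g k) (E k), hinnerEk k,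
        RCLike.mul_conj]
      norm_cast
    show ‖g (k + 1)‖ ^ 2 = ‖g k‖ ^ 2 - ‖(inner ℂ (E k) f : ℂ)‖ ^ 2
    rw [hsplit, key, h1, norm_smul, hEk1, mul_one, ← Complex.ofReal_pow, Complex.ofReal_re]
    ring
  -- inner ℂ (g k) f is real, equal to a k
  have hgf : ∀ k, (inner ℂ (g k) f : ℂ) = (a k : ℝ) := by
    intro k
    have hf : f = g k + ∑ i ∈ Finset.range k, (inner ℂ (E i) f : ℂ) • E i :=
      (sub_add_cancel f _).symm
    conv_lhs => rw [hf]
    rw [inner_add_right, inner_sum]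
    simp only [inner_smul_right]
    rw [Finset.sum_eq_zero, add_zero]
    · rw [inner_self_eq_norm_sq_to_K]
      simp only [ha]
      norm_cast
    · intro i hi
      rw [hgE k i (Finset.mem_range.mp hi), mul_zero]
  -- key bound on inner ℂ products with dictionary elements
  have hbound : ∀ k q, ‖(inner ℂ (g k) (e q) : ℂ)‖ ≤ Real.sqrt (S k) := by
    intro k q
    set r : H := e q - ∑ i ∈ Finset.range k, (inner ℂ (E i) (e q) : ℂ) • E i with hr
    have hEq : Ecand k q = ‖r‖⁻¹ • r := by rw [hEcand, ← hr]
    have hEir : ∀ i, i < k → (inner ℂ (E i) r : ℂ) = 0 := by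
      intro i hi
      rw [hr]; exact horth (e q) k i hi
    have hsup : ‖(inner ℂ (Ecand k q) f : ℂ)‖ ≤ Real.sqrt (S k) := by
      have h1 : ‖(inner ℂ (Ecand k q) f : ℂ)‖ ^ 2 ≤ S k := le_ciSup (hSbdd k) q
      have h2 := Real.sqrt_le_sqrt h1
      rwa [Real.sqrt_sq (norm_nonneg _)] at h2
    have h2 : (inner ℂ (g k) (e q) : ℂ) = inner ℂ (g k) r := by
      have he : e q = r + ∑ i ∈ Finset.range k, (inner ℂ (E i) (e q) : ℂ) • E i :=
        (sub_add_cancel _ _).symm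
      conv_lhs => rw [he]
      rw [inner_add_right, inner_sum]
      simp only [inner_smul_right]
      rw [Finset.sum_eq_zero, add_zero]
      intro i hi
      rw [hgE k i (Finset.mem_range.mp hi), mul_zero]
    rcases eq_or_ne ‖r‖ 0 with h0 | h0
    · rw [h2, norm_eq_zero.mp h0, inner_zero_right, norm_zero]
      exact Real.sqrt_nonneg _
    · have hru : ‖r‖ • Ecand k q = r := by
        rw [hEq, smul_inv_smul₀ h0]
      have h3 : ‖(inner ℂ (g k) r : ℂ)‖ = ‖r‖ * ‖(inner ℂ (g k) (Ecand k q) : ℂ)‖ := by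
        conv_lhs => rw [← hru]
        rw [RCLike.real_smul_eq_coe_smul (K := ℂ), inner_smul_right, norm_mul,
          RCLike.norm_ofReal, abs_of_nonneg (norm_nonneg r)]
      have h4 : ‖(inner ℂ (g k) (Ecand k q) : ℂ)‖ = ‖(inner ℂ (Ecand k q) f : ℂ)‖ := by
        rw [norm_inner_symm]
        congr 1
        have hco : ∀ i, i < k → (inner ℂ (Ecand k q) (E i) : ℂ) = 0 := by
          intro i hi
          rw [hEq, RCLike.real_smul_eq_coe_smul (K := ℂ), inner_smul_left,
            ← inner_conj_symm, hEir i hi, map_zero, mul_zero]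
        have hf : f = g k + ∑ i ∈ Finset.range k, (inner ℂ (E i) f : ℂ) • E i :=
          (sub_add_cancel f _).symm
        conv_rhs => rw [hf]
        rw [inner_add_right, inner_sum]
        simp only [inner_smul_right]
        rw [Finset.sum_eq_zero, add_zero]
        intro i hi
        rw [hco i (Finset.mem_range.mp hi), mul_zero]
      have hr1 : ‖r‖ ≤ 1 := by
        set p : H := ∑ i ∈ Finset.range k, (inner ℂ (E i) (e q) : ℂ) • E i with hp
        have hpr : (inner ℂ p r : ℂ) = 0 := by
          rw [hp, sum_inner]
          refine Finset.sum_eq_zero fun i hi => ?_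
          rw [inner_smul_left, hEir i (Finset.mem_range.mp hi), mul_zero]
        have hsq : ‖e q‖ ^ 2 = ‖p‖ ^ 2 + 2 * Complex.re (inner ℂ p r : ℂ) + ‖r‖ ^ 2 := by
          have he : e q = p + r := by rw [hp, hr]; abel
          rw [he]
          exact norm_add_sq (𝕜 := ℂ) p r
        rw [hpr] at hsq
        simp only [Complex.zero_re, mul_zero, add_zero] at hsq
        have h5 : ‖r‖ ^ 2 ≤ 1 := by
          have := hunit q
          nlinarith [sq_nonneg ‖p‖]
        nlinarith [norm_nonneg r]
      calc ‖(inner ℂ (g k) (e q) : ℂ)‖ = ‖r‖ * ‖(inner ℂ (Ecand k q) f : ℂ)‖ := by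
            rw [h2, h3, h4]
        _ ≤ 1 * Real.sqrt (S k) :=
            mul_le_mul hr1 hsup (norm_nonneg _) zero_le_one
        _ = Real.sqrt (S k) := one_mul _
  -- a k ≤ M * sqrt (S k)
  have hak : ∀ k, a k ≤ M * Real.sqrt (S k) := by
    intro k
    have hs : HasSum (fun l => (c l * inner ℂ (g k) (e (qs l)) : ℂ)) (inner ℂ (g k) f) := by
      have h := (innerSL ℂ (g k)).hasSum hrep
      simpa [innerSL_apply_apply] using h
    have hterm : ∀ l, ‖(c l * inner ℂ (g k) (e (qs l)) : ℂ)‖ ≤ ‖c l‖ * Real.sqrt (S k) := by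
      intro l
      rw [norm_mul]
      exact mul_le_mul_of_nonneg_left (hbound k (qs l)) (norm_nonneg _)
    have hsum2 : Summable fun l => ‖c l‖ * Real.sqrt (S k) := hMfin.mul_right _
    have hsum1 : Summable fun l => ‖(c l * inner ℂ (g k) (e (qs l)) : ℂ)‖ :=
      Summable.of_nonneg_of_le (fun _ => norm_nonneg _) hterm hsum2
    have h5 : ‖(inner ℂ (g k) f : ℂ)‖ ≤ ∑' l, ‖(c l * inner ℂ (g k) (e (qs l)) : ℂ)‖ := by
      rw [← hs.tsum_eq]
      exact norm_tsum_le_tsum_norm hsum1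
    have h6 : (∑' l, ‖(c l * inner ℂ (g k) (e (qs l)) : ℂ)‖)
        ≤ ∑' l, ‖c l‖ * Real.sqrt (S k) := Summable.tsum_le_tsum hterm hsum1 hsum2
    have h7 : (∑' l, ‖c l‖ * Real.sqrt (S k)) = M * Real.sqrt (S k) := by
      rw [tsum_mul_right, hM]
    have hknn : (0 : ℝ) ≤ a k := sq_nonneg ‖g k‖
    have h8 : a k = ‖(inner ℂ (g k) f : ℂ)‖ := by
      rw [hgf k, Complex.norm_real]
      exact (Real.norm_of_nonneg hknn).symm
    rw [h8]
    linarith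
  -- weak selection gives lower bound for the chosen coefficient
  have hEkf : ∀ k, ρ * Real.sqrt (S k) ≤ ‖(inner ℂ (E k) f : ℂ)‖ := by
    intro k
    have h := hweak k
    have h2 : Real.sqrt (ρ ^ 2 * S k) ≤ Real.sqrt (‖(inner ℂ (E k) f : ℂ)‖ ^ 2) :=
      Real.sqrt_le_sqrt h
    rwa [Real.sqrt_mul (sq_nonneg ρ), Real.sqrt_sq hρ0.le, Real.sqrt_sq (norm_nonneg _)] at h2
  -- norm of f bounded by M
  have hfM : ‖f‖ ≤ M := by
    have hnorm : ∀ l, ‖c l • e (qs l)‖ = ‖c l‖ := by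
      intro l; rw [norm_smul, hunit, mul_one]
    have hsum : Summable fun l => ‖c l • e (qs l)‖ := by simpa [hnorm] using hMfin
    have h1 := norm_tsum_le_tsum_norm hsum
    rw [hrep.tsum_eq] at h1
    calc ‖f‖ ≤ ∑' l, ‖c l • e (qs l)‖ := h1
      _ = ∑' l, ‖c l‖ := tsum_congr hnorm
      _ = M := hM.symm
  have hMnn : 0 ≤ M := le_trans (norm_nonneg f) hfM
  have hann : ∀ k, 0 ≤ a k := fun k => sq_nonneg _
  rcases eq_or_lt_of_le hMnn with hM0 | hMpos
  · -- M = 0 : f = 0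
    have hf0 : f = 0 := by
      rw [← norm_le_zero_iff, hM0]; exact hfM
    have hgz : g n = 0 := by simp [hg, hf0]
    rw [hgz, norm_zero]
    exact div_nonneg hMnn (mul_nonneg hρ0.le (Real.sqrt_nonneg _))
  · -- M > 0
    set B : ℝ := M ^ 2 / ρ ^ 2 with hB
    have hBpos : 0 < B := by positivity
    have hstep : ∀ k, a (k + 1) ≤ a k - a k ^ 2 / B := by
      intro k
      have h1 : ρ * a k ≤ M * ‖(inner ℂ (E k) f : ℂ)‖ := by
        calc ρ * a k ≤ ρ * (M * Real.sqrt (S k)) :=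
              mul_le_mul_of_nonneg_left (hak k) hρ0.le
          _ = M * (ρ * Real.sqrt (S k)) := by ring
          _ ≤ M * ‖(inner ℂ (E k) f : ℂ)‖ := mul_le_mul_of_nonneg_left (hEkf k) hMnn
      have h2 : a k ^ 2 / B ≤ ‖(inner ℂ (E k) f : ℂ)‖ ^ 2 := by
        rw [hB, div_div_eq_mul_div, div_le_iff₀ (by positivity : (0:ℝ) < M ^ 2)]
        have h0 : 0 ≤ ρ * a k := mul_nonneg hρ0.le (hann k)
        nlinarith [mul_self_le_mul_self h0 h1]
      rw [hrec k]
      linarith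
    have hstart : a 0 ≤ B := by
      have h1 : a 0 ≤ M ^ 2 := by
        have := pow_le_pow_left₀ (norm_nonneg f) hfM 2
        simpa [ha, hg] using this
      have h2 : M ^ 2 ≤ B := by
        rw [hB, le_div_iff₀ (by positivity)]
        have hρsq : ρ ^ 2 ≤ 1 := by nlinarith
        nlinarith [mul_nonneg (sq_nonneg M) (sub_nonneg.mpr hρsq)]
      linarith
    have hfinal := aux_rec B hBpos a hann hstart hstep n
    -- conclude
    have hnpos : (0 : ℝ) < n := by exact_mod_cast hn
    have h1 : a n ≤ B / n := by
      rw [le_div_iff₀ hnpos]; exact hfinal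
    have h2 : ‖g n‖ ≤ Real.sqrt (B / n) := by
      have h4 := Real.sqrt_le_sqrt h1
      simp only [ha] at h4
      rwa [Real.sqrt_sq (norm_nonneg _)] at h4
    have h3 : Real.sqrt (B / n) = M / (ρ * Real.sqrt n) := by
      rw [hB, Real.sqrt_div (by positivity), Real.sqrt_div (by positivity),
        Real.sqrt_sq hMnn, Real.sqrt_sq hρ0.le, div_div]
    rw [← h3]
    exact h2
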